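/- Let s^1,…,s^k be time series with s^l ∈ ℝ^{m_l}, let n ≥ 1, and let P_1,…,P_k be warping paths where P_l has order m_l×n. Consider variables d_{l,v} and δ_{l,v} for l ∈ {1,…,k} and v = (i,j) ∈ {1,…,m_l}×{1,…,n}, and z ∈ ℝ^n, subject to the constraints d_{l,v} ≥ (z_j − s^l_i)² − δ_{l,v}, d_{l,v} ≥ 0, and δ_{l,v} ≥ 0 for all l and v = (i,j). Then the infimum over all feasible (d, δ, z) of ∑_{l=1}^k ∑_{v} (1/k)·d_{l,v} + ∑_{l=1}^k ∑_{v ∈ V(P_l)} (1/k)·δ_{l,v} equals min over z ∈ ℝ^n of (1/k) ∑_{l=1}^k ∑_{(i,j)∈V(P_l)} (z_j − s^l_i)², and this infimum is attained at (d*, δ*, z*) given by: z*_j := (∑_{l=1}^k ∑_{i : (i,j)∈V(P_l)} s^l_i) / (∑_{l=1}^k |{i : (i,j)∈V(P_l)}|); d*_{l,v} := (z*_j − s^l_i)² if v = (i,j) ∈ V(P_l) and 0 otherwise; δ*_{l,v} := 0 if v ∈ V(P_l) and (z*_j − s^l_i)² otherwise. -/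
import Mathlib


/-- A warping path of order `m × n`: a finite sequence of pairs of positive
integers starting at `(1,1)`, ending at `(m,n)`, each step increasing the
coordinates by `(1,0)`, `(0,1)` or `(1,1)`. -/
structure WarpingPath (m n : ℕ) where
  len : ℕ
  len_pos : 0 < len
  pt : ℕ → ℕ × ℕ
  first : pt 0 = (1, 1)
  last : pt (len - 1) = (m, n)
  step : ∀ t, t + 1 < len →
    pt (t + 1) = ((pt t).1 + 1, (pt t).2) ∨
    pt (t + 1) = ((pt t).1, (pt t).2 + 1) ∨
    pt (t + 1) = ((pt t).1 + 1, (pt t).2 + 1)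

/-- The set of vertices `V(P)` of a warping path. -/
def WarpingPath.V {m n : ℕ} (P : WarpingPath m n) : Finset (ℕ × ℕ) :=
  (Finset.range P.len).image P.pt

/-- The cost `C_P(s, s') = ∑_{(i,j) ∈ V(P)} (s_i − s'_j)²` of a warping path. -/
noncomputable def WarpingPath.cost {m n : ℕ} (P : WarpingPath m n) (s s' : ℕ → ℝ) : ℝ :=
  ∑ v ∈ P.V, (s v.1 - s' v.2) ^ 2

/-- The dtw-distance between a time series `s` of length `m` and a time series
`s'` of length `n`: the minimum over all warping paths `P` of order `m × n` of
`√(C_P(s, s'))`. -/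
noncomputable def dtw (m n : ℕ) (s s' : ℕ → ℝ) : ℝ :=
  Real.sqrt (sInf {c : ℝ | ∃ P : WarpingPath m n, c = P.cost s s'})

lemma wp_mono {m n : ℕ} (P : WarpingPath m n) :
    ∀ a b, a ≤ b → b < P.len → (P.pt a).1 ≤ (P.pt b).1 ∧ (P.pt a).2 ≤ (P.pt b).2 := by
  intro a b hab
  induction b, hab using Nat.le_induction with
  | base => intro _; exact ⟨le_rfl, le_rfl⟩
  | succ b hb ih =>
    intro h
    obtain ⟨h1, h2⟩ := ih (lt_trans (Nat.lt_succ_self b) h)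
    rcases P.step b h with hs | hs | hs <;> rw [hs] <;> constructor <;> simp <;> omega

lemma wp_mem_box {m n : ℕ} (P : WarpingPath m n) :
    P.V ⊆ Finset.Icc 1 m ×ˢ Finset.Icc 1 n := by
  intro v hv
  simp only [WarpingPath.V, Finset.mem_image, Finset.mem_range] at hv
  obtain ⟨t, ht, rfl⟩ := hv
  have h0 := wp_mono P 0 t (Nat.zero_le t) ht
  have hl := wp_mono P t (P.len - 1) (by omega) (by have := P.len_pos; omega)
  rw [P.first] at h0
  rw [P.last] at hl
  simp only [Finset.mem_product, Finset.mem_Icc]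
  exact ⟨⟨h0.1, hl.1⟩, ⟨h0.2, hl.2⟩⟩

lemma key_min {k : ℕ} (A : Fin k → Finset (ℕ × ℕ)) (a : Fin k → ℕ × ℕ → ℝ) (μ z : ℝ)
    (hμ : ((∑ l, (A l).card : ℕ) : ℝ) * μ = ∑ l, ∑ x ∈ A l, a l x) :
    ∑ l, ∑ x ∈ A l, (μ - a l x) ^ 2 ≤ ∑ l, ∑ x ∈ A l, (z - a l x) ^ 2 := by
  have expand : ∀ w : ℝ, ∑ l, ∑ x ∈ A l, (w - a l x) ^ 2
      = ((∑ l, (A l).card : ℕ) : ℝ) * w ^ 2 - 2 * w * (∑ l, ∑ x ∈ A l, a l x)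
        + ∑ l, ∑ x ∈ A l, (a l x) ^ 2 := by
    intro w
    have : ∀ l, ∑ x ∈ A l, (w - a l x) ^ 2
        = ((A l).card : ℝ) * w ^ 2 - 2 * w * (∑ x ∈ A l, a l x) + ∑ x ∈ A l, (a l x) ^ 2 := by
      intro l
      rw [Finset.sum_congr rfl (fun x _ => (sub_sq w (a l x)))]
      rw [Finset.sum_add_distrib, Finset.sum_sub_distrib, Finset.sum_const, ← Finset.mul_sum,
        nsmul_eq_mul]
    rw [Finset.sum_congr rfl (fun l _ => this l), Finset.sum_add_distrib,
      Finset.sum_sub_distrib, ← Finset.sum_mul, ← Finset.mul_sum, Nat.cast_sum]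
  have hdiff : ∑ l, ∑ x ∈ A l, (z - a l x) ^ 2 - ∑ l, ∑ x ∈ A l, (μ - a l x) ^ 2
      = ((∑ l, (A l).card : ℕ) : ℝ) * (z - μ) ^ 2 := by
    rw [expand z, expand μ]
    linear_combination (2 * z - 2 * μ) * hμ
  have hnn : (0:ℝ) ≤ ((∑ l, (A l).card : ℕ) : ℝ) * (z - μ) ^ 2 :=
    mul_nonneg (Nat.cast_nonneg _) (sq_nonneg _)
  linarith [hdiff, hnn]

theorem stmt15 (k : ℕ) (hk : 1 ≤ k) (m : Fin k → ℕ) (hm : ∀ l, 1 ≤ m l)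
    (s : Fin k → ℕ → ℝ) (n : ℕ) (hn : 1 ≤ n)
    (P : ∀ l : Fin k, WarpingPath (m l) n)
    (zstar : ℕ → ℝ)
    (hzstar : ∀ j : ℕ, zstar j =
      (∑ l : Fin k, ∑ v ∈ (P l).V.filter (fun v => v.2 = j), s l v.1) /
      ((∑ l : Fin k, ((P l).V.filter (fun v => v.2 = j)).card : ℕ) : ℝ))
    (dstar deltastar : Fin k → ℕ × ℕ → ℝ)
    (hdstar : ∀ (l : Fin k) (v : ℕ × ℕ),
      dstar l v = if v ∈ (P l).V then (zstar v.2 - s l v.1) ^ 2 else 0)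
    (hdeltastar : ∀ (l : Fin k) (v : ℕ × ℕ),
      deltastar l v = if v ∈ (P l).V then 0 else (zstar v.2 - s l v.1) ^ 2) :
    -- `(dstar, deltastar, zstar)` is feasible
    (∀ (l : Fin k), ∀ v ∈ Finset.Icc 1 (m l) ×ˢ Finset.Icc 1 n,
      dstar l v ≥ (zstar v.2 - s l v.1) ^ 2 - deltastar l v ∧
      0 ≤ dstar l v ∧ 0 ≤ deltastar l v) ∧
    -- the infimum over all feasible `(d, delta, z)` of the objective is attained
    -- at the objective value of `(dstar, deltastar, zstar)`
    IsLeast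
      {r : ℝ | ∃ (d delta : Fin k → ℕ × ℕ → ℝ) (z : ℕ → ℝ),
        (∀ (l : Fin k), ∀ v ∈ Finset.Icc 1 (m l) ×ˢ Finset.Icc 1 n,
          d l v ≥ (z v.2 - s l v.1) ^ 2 - delta l v ∧ 0 ≤ d l v ∧ 0 ≤ delta l v) ∧
        r = (∑ l : Fin k, ∑ v ∈ Finset.Icc 1 (m l) ×ˢ Finset.Icc 1 n,
              (1 / (k : ℝ)) * d l v) +
            ∑ l : Fin k, ∑ v ∈ (P l).V, (1 / (k : ℝ)) * delta l v}
      ((∑ l : Fin k, ∑ v ∈ Finset.Icc 1 (m l) ×ˢ Finset.Icc 1 n,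
          (1 / (k : ℝ)) * dstar l v) +
        ∑ l : Fin k, ∑ v ∈ (P l).V, (1 / (k : ℝ)) * deltastar l v) ∧
    -- and this value equals the minimum over `z ∈ ℝ^n` of
    -- `(1/k) ∑_l ∑_{(i,j) ∈ V(P_l)} (z_j − s^l_i)²`
    IsLeast
      {r : ℝ | ∃ z : ℕ → ℝ,
        r = (1 / (k : ℝ)) * ∑ l : Fin k, ∑ v ∈ (P l).V, (z v.2 - s l v.1) ^ 2}
      ((∑ l : Fin k, ∑ v ∈ Finset.Icc 1 (m l) ×ˢ Finset.Icc 1 n,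
          (1 / (k : ℝ)) * dstar l v) +
        ∑ l : Fin k, ∑ v ∈ (P l).V, (1 / (k : ℝ)) * deltastar l v) := by
  have hVbox : ∀ l, (P l).V ⊆ Finset.Icc 1 (m l) ×ˢ Finset.Icc 1 n :=
    fun l => wp_mem_box (P l)
  have hks : (0:ℝ) ≤ 1 / (k : ℝ) := by positivity
  -- the mean property of zstar
  have hμ : ∀ j : ℕ,
      ((∑ l : Fin k, ((P l).V.filter (fun v => v.2 = j)).card : ℕ) : ℝ) * zstar j
        = ∑ l : Fin k, ∑ v ∈ (P l).V.filter (fun v => v.2 = j), s l v.1 := by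
    intro j
    rw [hzstar j]
    by_cases hN : (∑ l : Fin k, ((P l).V.filter (fun v => v.2 = j)).card) = 0
    · have hall : ∀ l : Fin k, ((P l).V.filter (fun v => v.2 = j)) = ∅ := by
        intro l
        rw [← Finset.card_eq_zero]
        exact (Finset.sum_eq_zero_iff.mp hN) l (Finset.mem_univ l)
      have hS : (∑ l : Fin k, ∑ v ∈ (P l).V.filter (fun v => v.2 = j), s l v.1) = 0 :=
        Finset.sum_eq_zero (fun l _ => by rw [hall l, Finset.sum_empty])
      rw [hS, hN]
      norm_num
    · have hN' : ((∑ l : Fin k, ((P l).V.filter (fun v => v.2 = j)).card : ℕ) : ℝ) ≠ 0 :=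
        Nat.cast_ne_zero.mpr hN
      rw [mul_comm, div_mul_cancel₀ _ hN']
  -- zstar minimizes F
  have hFmin : ∀ z : ℕ → ℝ,
      ∑ l : Fin k, ∑ v ∈ (P l).V, (zstar v.2 - s l v.1) ^ 2
        ≤ ∑ l : Fin k, ∑ v ∈ (P l).V, (z v.2 - s l v.1) ^ 2 := by
    intro z
    have hfib : ∀ (w : ℕ → ℝ) (l : Fin k), ∑ v ∈ (P l).V, (w v.2 - s l v.1) ^ 2
        = ∑ j ∈ Finset.Icc 1 n, ∑ v ∈ (P l).V.filter (fun v => v.2 = j),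
            (w j - s l v.1) ^ 2 := by
      intro w l
      rw [← Finset.sum_fiberwise_of_maps_to (g := fun v => v.2) (t := Finset.Icc 1 n)
        (fun v hv => (Finset.mem_product.mp (hVbox l hv)).2)]
      exact Finset.sum_congr rfl (fun j _ => Finset.sum_congr rfl
        (fun v hv => by rw [(Finset.mem_filter.mp hv).2]))
    calc ∑ l : Fin k, ∑ v ∈ (P l).V, (zstar v.2 - s l v.1) ^ 2
        = ∑ j ∈ Finset.Icc 1 n, ∑ l : Fin k,
            ∑ v ∈ (P l).V.filter (fun v => v.2 = j), (zstar j - s l v.1) ^ 2 := by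
          rw [Finset.sum_congr rfl (fun l _ => hfib zstar l)]; exact Finset.sum_comm
      _ ≤ ∑ j ∈ Finset.Icc 1 n, ∑ l : Fin k,
            ∑ v ∈ (P l).V.filter (fun v => v.2 = j), (z j - s l v.1) ^ 2 :=
          Finset.sum_le_sum (fun j _ => key_min _ _ _ _ (hμ j))
      _ = ∑ l : Fin k, ∑ v ∈ (P l).V, (z v.2 - s l v.1) ^ 2 := by
          rw [← Finset.sum_comm]
          exact (Finset.sum_congr rfl (fun l _ => hfib z l)).symm
  -- value of the objective at the starred point
  have hdstar_sum : ∀ l : Fin k,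
      ∑ v ∈ Finset.Icc 1 (m l) ×ˢ Finset.Icc 1 n, (1 / (k : ℝ)) * dstar l v
        = ∑ v ∈ (P l).V, (1 / (k : ℝ)) * (zstar v.2 - s l v.1) ^ 2 := by
    intro l
    simp only [hdstar, mul_ite, mul_zero]
    rw [Finset.sum_ite_mem, Finset.inter_eq_right.mpr (hVbox l)]
  have hδstar_sum : ∀ l : Fin k,
      ∑ v ∈ (P l).V, (1 / (k : ℝ)) * deltastar l v = 0 :=
    fun l => Finset.sum_eq_zero (fun v hv => by rw [hdeltastar, if_pos hv, mul_zero])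
  have hstarval :
      (∑ l : Fin k, ∑ v ∈ Finset.Icc 1 (m l) ×ˢ Finset.Icc 1 n,
          (1 / (k : ℝ)) * dstar l v) +
        ∑ l : Fin k, ∑ v ∈ (P l).V, (1 / (k : ℝ)) * deltastar l v
      = (1 / (k : ℝ)) * ∑ l : Fin k, ∑ v ∈ (P l).V, (zstar v.2 - s l v.1) ^ 2 := by
    rw [Finset.sum_congr rfl (fun l _ => hdstar_sum l),
      Finset.sum_congr rfl (fun l _ => hδstar_sum l), Finset.sum_const_zero, add_zero,
      Finset.mul_sum]
    exact Finset.sum_congr rfl (fun l _ => (Finset.mul_sum _ _ _).symm)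
  -- feasibility of the starred point
  have hfeas_star : ∀ (l : Fin k), ∀ v ∈ Finset.Icc 1 (m l) ×ˢ Finset.Icc 1 n,
      dstar l v ≥ (zstar v.2 - s l v.1) ^ 2 - deltastar l v ∧
      0 ≤ dstar l v ∧ 0 ≤ deltastar l v := by
    intro l v _
    rw [hdstar, hdeltastar]
    by_cases h : v ∈ (P l).V <;> simp [h, sq_nonneg]
  refine ⟨hfeas_star, ⟨⟨dstar, deltastar, zstar, hfeas_star, rfl⟩, ?_⟩,
    ⟨⟨zstar, hstarval⟩, ?_⟩⟩
  · -- lower bound over all feasible points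
    rintro r ⟨d, δ, z, hfeas, rfl⟩
    rw [hstarval]
    have h1 : (1 / (k : ℝ)) * ∑ l : Fin k, ∑ v ∈ (P l).V, (zstar v.2 - s l v.1) ^ 2
        ≤ (1 / (k : ℝ)) * ∑ l : Fin k, ∑ v ∈ (P l).V, (z v.2 - s l v.1) ^ 2 :=
      mul_le_mul_of_nonneg_left (hFmin z) hks
    have h2 : (1 / (k : ℝ)) * ∑ l : Fin k, ∑ v ∈ (P l).V, (z v.2 - s l v.1) ^ 2
        ≤ (∑ l : Fin k, ∑ v ∈ (P l).V, (1 / (k : ℝ)) * d l v) +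
          ∑ l : Fin k, ∑ v ∈ (P l).V, (1 / (k : ℝ)) * δ l v := by
      rw [← Finset.sum_add_distrib, Finset.mul_sum]
      refine Finset.sum_le_sum (fun l _ => ?_)
      rw [← Finset.sum_add_distrib, Finset.mul_sum]
      refine Finset.sum_le_sum (fun v hv => ?_)
      have hf := hfeas l v (hVbox l hv)
      have : (z v.2 - s l v.1) ^ 2 ≤ d l v + δ l v := by linarith [hf.1]
      have := mul_le_mul_of_nonneg_left this hks
      linarith [this]
    have h3 : ∑ l : Fin k, ∑ v ∈ (P l).V, (1 / (k : ℝ)) * d l v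
        ≤ ∑ l : Fin k, ∑ v ∈ Finset.Icc 1 (m l) ×ˢ Finset.Icc 1 n,
            (1 / (k : ℝ)) * d l v := by
      refine Finset.sum_le_sum (fun l _ => ?_)
      refine Finset.sum_le_sum_of_subset_of_nonneg (hVbox l) (fun v hv _ => ?_)
      exact mul_nonneg hks (hfeas l v hv).2.1
    linarith [h1, h2, h3]
  · -- lower bound over all z
    rintro r ⟨z, rfl⟩
    rw [hstarval]
    exact mul_le_mul_of_nonneg_left (hFmin z) hks
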